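/- Let σ ∈ (0,1]. For ξ > 0 and real x, y define F(x, y, ξ) = x − (2(1+ξ)/(ξ(2+ξ)))·y − (1+ξ)·( −σ(4+ξ)/(ξ(2+ξ)) + (ξ + 2σ(1+ξ) + √(ξ² + 4σ²(1+ξ)))/(2ξ(1+ξ)) ), and define x(ξ) = 1/2 + (2σ²ξ(ξ+1) + ξ(2+ξ(2+ξ)))/(2(2+ξ(2+ξ))·√(ξ²+4σ²(1+ξ))) and y(ξ) = σ − σ²(2+ξ)³/(2(2+ξ(2+ξ))·√(ξ²+4σ²(1+ξ))). Then for every ξ > 0: (i) F(x(ξ), y(ξ), ξ) = 0, and (ii) the derivative of the function ξ' ↦ F(x(ξ), y(ξ), ξ') at ξ' = ξ equals 0. -/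

import Mathlib

/-- The parametrization `(x(ξ), y(ξ))` of the arctic curve of the 6V model with pDWBC at
the free-fermion point (`a = b = 1`, `c = √2`, aspect ratio `σ`) is the envelope of the
family of tangent lines `F(x,y,ξ) = 0`: for every `ξ > 0`, `F(x(ξ),y(ξ),ξ) = 0` and
`∂_ξ F(x(ξ),y(ξ),ξ) = 0`. -/
theorem arctic_curve_envelope_6V_pDWBC (σ : ℝ) (hσ0 : 0 < σ) (hσ1 : σ ≤ 1)
    (F : ℝ → ℝ → ℝ → ℝ)
    (hF : ∀ x y ξ : ℝ, F x y ξ =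
      x - (2 * (1 + ξ) / (ξ * (2 + ξ))) * y -
        (1 + ξ) * (-σ * (4 + ξ) / (ξ * (2 + ξ)) +
          (ξ + 2 * σ * (1 + ξ) + Real.sqrt (ξ ^ 2 + 4 * σ ^ 2 * (1 + ξ))) /
            (2 * ξ * (1 + ξ))))
    (x y : ℝ → ℝ)
    (hx : ∀ ξ : ℝ, x ξ = 1 / 2 +
      (2 * σ ^ 2 * ξ * (ξ + 1) + ξ * (2 + ξ * (2 + ξ))) /
        (2 * (2 + ξ * (2 + ξ)) * Real.sqrt (ξ ^ 2 + 4 * σ ^ 2 * (1 + ξ))))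
    (hy : ∀ ξ : ℝ, y ξ = σ -
      σ ^ 2 * (2 + ξ) ^ 3 /
        (2 * (2 + ξ * (2 + ξ)) * Real.sqrt (ξ ^ 2 + 4 * σ ^ 2 * (1 + ξ)))) :
    ∀ ξ : ℝ, 0 < ξ →
      F (x ξ) (y ξ) ξ = 0 ∧ deriv (fun ξ' => F (x ξ) (y ξ) ξ') ξ = 0 := by
  intro ξ hξ
  have hinner : (0:ℝ) < ξ ^ 2 + 4 * σ ^ 2 * (1 + ξ) := by positivity
  set s := Real.sqrt (ξ ^ 2 + 4 * σ ^ 2 * (1 + ξ)) with hsdef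
  have hspos : 0 < s := Real.sqrt_pos.mpr hinner
  have hs2 : s ^ 2 = ξ ^ 2 + 4 * σ ^ 2 * (1 + ξ) := Real.sq_sqrt hinner.le
  have h1 : ξ ≠ 0 := hξ.ne'
  have h2 : (2 + ξ) ≠ 0 := by linarith
  have h3 : (1 + ξ) ≠ 0 := by linarith
  have h4 : (2 + ξ * (2 + ξ)) ≠ 0 := by nlinarith
  have h2' : (ξ * (2 + ξ)) ≠ 0 := by positivity
  have h3' : (2 * ξ * (1 + ξ)) ≠ 0 := by positivity
  constructor
  · rw [hF, hx, hy]
    rw [← hsdef]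
    field_simp
    ring_nf
    linear_combination (-4-6*ξ-4*ξ^2-ξ^3) * hs2
  · have hfun : (fun ξ' => F (x ξ) (y ξ) ξ') =
        (fun t : ℝ => x ξ - (2 * (1 + t) / (t * (2 + t))) * y ξ -
          (1 + t) * (-σ * (4 + t) / (t * (2 + t)) +
            (t + 2 * σ * (1 + t) + Real.sqrt (t ^ 2 + 4 * σ ^ 2 * (1 + t))) /
              (2 * t * (1 + t)))) := funext fun t => hF _ _ t
    rw [hfun]
    have hid := hasDerivAt_id ξ
    have hA : HasDerivAt (fun t : ℝ => 2 * (1 + t)) (2 * 1) ξ := (hid.const_add 1).const_mul 2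
    have hB : HasDerivAt (fun t : ℝ => t * (2 + t)) (1 * (2 + ξ) + ξ * 1) ξ := hid.mul (hid.const_add 2)
    have hAB := (hA.div hB h2').mul_const (y ξ)
    have hC : HasDerivAt (fun t : ℝ => -σ * (4 + t)) (-σ * 1) ξ := (hid.const_add 4).const_mul (-σ)
    have hq : HasDerivAt (fun t : ℝ => t ^ 2 + 4 * σ ^ 2 * (1 + t)) ((2:ℕ) * ξ ^ 1 + 4 * σ ^ 2 * 1) ξ :=
      (hasDerivAt_pow 2 ξ).add ((hid.const_add 1).const_mul (4 * σ ^ 2))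
    have hsq := hq.sqrt hinner.ne'
    have hnum : HasDerivAt (fun t : ℝ => t + 2 * σ * (1 + t) + Real.sqrt (t ^ 2 + 4 * σ ^ 2 * (1 + t)))
        (1 + 2 * σ * 1 + ((2:ℕ) * ξ ^ 1 + 4 * σ ^ 2 * 1) / (2 * Real.sqrt (ξ ^ 2 + 4 * σ ^ 2 * (1 + ξ)))) ξ :=
      (hid.add ((hid.const_add 1).const_mul (2 * σ))).add hsq
    have hden : HasDerivAt (fun t : ℝ => 2 * t * (1 + t)) (2 * 1 * (1 + ξ) + 2 * ξ * 1) ξ :=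
      (hid.const_mul 2).mul (hid.const_add 1)
    have hfrac := hnum.div hden h3'
    have hbig := (hid.const_add 1).mul ((hC.div hB h2').add hfrac)
    have htot : HasDerivAt (fun t : ℝ => x ξ - (2 * (1 + t) / (t * (2 + t))) * y ξ -
        (1 + t) * (-σ * (4 + t) / (t * (2 + t)) +
          (t + 2 * σ * (1 + t) + Real.sqrt (t ^ 2 + 4 * σ ^ 2 * (1 + t))) /
            (2 * t * (1 + t))))
      (0 - ((2 * 1 * (ξ * (2 + ξ)) - 2 * (1 + ξ) * (1 * (2 + ξ) + ξ * 1)) / (ξ * (2 + ξ)) ^ 2 * y ξ) -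
        (1 * (-σ * (4 + ξ) / (ξ * (2 + ξ)) +
            (ξ + 2 * σ * (1 + ξ) + Real.sqrt (ξ ^ 2 + 4 * σ ^ 2 * (1 + ξ))) / (2 * ξ * (1 + ξ))) +
         (1 + ξ) * ((-σ * 1 * (ξ * (2 + ξ)) - -σ * (4 + ξ) * (1 * (2 + ξ) + ξ * 1)) / (ξ * (2 + ξ)) ^ 2 +
           ((1 + 2 * σ * 1 + ((2:ℕ) * ξ ^ 1 + 4 * σ ^ 2 * 1) / (2 * Real.sqrt (ξ ^ 2 + 4 * σ ^ 2 * (1 + ξ)))) * (2 * ξ * (1 + ξ)) -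
             (ξ + 2 * σ * (1 + ξ) + Real.sqrt (ξ ^ 2 + 4 * σ ^ 2 * (1 + ξ))) * (2 * 1 * (1 + ξ) + 2 * ξ * 1)) /
            (2 * ξ * (1 + ξ)) ^ 2))) ξ := ((hasDerivAt_const ξ (x ξ)).sub hAB).sub hbig
    rw [htot.deriv]
    rw [hy, ← hsdef]
    push_cast
    field_simp
    ring_nf
    linear_combination (16+48*ξ+60*ξ^2+40*ξ^3+14*ξ^4+2*ξ^5) * hs2
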